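/- The β-conditional expectation E_ℬ^β is a contraction: for all φ, ψ ∈ L^p(Ω;M), d_p(E_ℬ^β(φ), E_ℬ^β(ψ)) ≤ d_p(φ,ψ), where d_p denotes the L^p distance d_p(φ,ψ) = (∫ d^p(φ(ω),ψ(ω)) dP)^{1/p}. -/

import Mathlib

open MeasureTheory ENNReal Filter Topology

noncomputable section

variable {Ω M : Type*}

/-- A coupling of two measures on `M`. -/
def IsCoupling [MeasurableSpace M] (π : MeasureTheory.Measure (M × M))
    (μ ν : MeasureTheory.Measure M) : Prop :=
  π.map Prod.fst = μ ∧ π.map Prod.snd = ν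

/-- The `p`-Wasserstein (extended) distance between two measures. -/
def wassDist [MeasurableSpace M] [PseudoEMetricSpace M] (p : ℝ)
    (μ ν : MeasureTheory.Measure M) : ℝ≥0∞ :=
  ⨅ (π : MeasureTheory.Measure (M × M)) (_ : IsCoupling π μ ν),
    (∫⁻ xy, edist xy.1 xy.2 ^ p ∂π) ^ (1 / p)

/-- Finite `p`-th moment. -/
def HasFinitePMoment [MeasurableSpace M] [PseudoEMetricSpace M] (p : ℝ)
    (μ : MeasureTheory.Measure M) : Prop :=
  ∀ x : M, ∫⁻ y, edist x y ^ p ∂μ < ⊤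

/-- `p`-th Bochner integrability of an `M`-valued function. -/
def PIntegrable {mΩ : MeasurableSpace Ω} [PseudoEMetricSpace M] (p : ℝ)
    (P : MeasureTheory.Measure Ω) (φ : Ω → M) : Prop :=
  MeasureTheory.AEStronglyMeasurable φ P ∧ ∀ x : M, ∫⁻ ω, edist x (φ ω) ^ p ∂P < ⊤

/-- A `p`-contractive barycentric map. -/
structure IsBarycentric [MeasurableSpace M] [PseudoEMetricSpace M] (p : ℝ)
    (β : MeasureTheory.Measure M → M) : Prop where
  map_dirac : ∀ x : M, β (MeasureTheory.Measure.dirac x) = x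
  contract : ∀ μ ν : MeasureTheory.Measure M, MeasureTheory.IsProbabilityMeasure μ →
    MeasureTheory.IsProbabilityMeasure ν → HasFinitePMoment p μ → HasFinitePMoment p ν →
    edist (β μ) (β ν) ≤ wassDist p μ ν

/-- A disintegration of `P` with respect to the sub-σ-algebra `ℬ`:
a family of probability measures `K ω` (on the ambient σ-algebra) such that for
every measurable `A`, `ω ↦ K ω A` is `ℬ`-measurable and is a version of the
conditional expectation of the indicator of `A` with respect to `ℬ`. -/
def IsDisintegration {mΩ : MeasurableSpace Ω} (P : @MeasureTheory.Measure Ω mΩ)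
    (ℬ : MeasurableSpace Ω) (K : Ω → @MeasureTheory.Measure Ω mΩ) : Prop :=
  (∀ ω, MeasureTheory.IsProbabilityMeasure (K ω)) ∧
  ∀ A : Set Ω, MeasurableSet[mΩ] A →
    Measurable[ℬ] (fun ω => (K ω A).toReal) ∧
    (fun ω => (K ω A).toReal) =ᵐ[P] P[A.indicator (fun _ => (1 : ℝ)) | ℬ]

/-- The `β`-conditional expectation `ω ↦ β (φ_* P_ω)` defined from a
disintegration `K` of `P`. -/
def condBary {mΩ : MeasurableSpace Ω} [MeasurableSpace M] [PseudoEMetricSpace M]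
    (β : MeasureTheory.Measure M → M) (K : Ω → @MeasureTheory.Measure Ω mΩ)
    (φ : Ω → M) (ω : Ω) : M :=
  β ((K ω).map φ)

section Aux

variable {Ω M : Type*}

open MeasureTheory ENNReal

lemma aux_measurable_K (ℬ : MeasurableSpace Ω) [mΩ : MeasurableSpace Ω] (hℬ : ℬ ≤ mΩ) {P : Measure Ω} {K : Ω → Measure Ω} (hK : IsDisintegration P ℬ K) :
    Measurable K := by
  apply Measure.measurable_of_measurable_coe
  intro A hA
  have h1 : Measurable fun ω => (K ω A).toReal :=
    ((hK.2 A hA).1).mono hℬ le_rfl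
  have h2 : (fun ω => K ω A) = fun ω => ENNReal.ofReal (K ω A).toReal := by
    funext ω
    haveI := hK.1 ω
    rw [ENNReal.ofReal_toReal (measure_ne_top _ _)]
  rw [h2]
  exact ENNReal.measurable_ofReal.comp h1

lemma aux_bind_eq (ℬ : MeasurableSpace Ω) [mΩ : MeasurableSpace Ω] (hℬ : ℬ ≤ mΩ)
    {P : Measure Ω} [IsProbabilityMeasure P] {K : Ω → Measure Ω}
    (hK : IsDisintegration P ℬ K) : P.bind K = P := by
  have hKm := aux_measurable_K ℬ hℬ hK
  ext A hA
  rw [Measure.bind_apply hA hKm.aemeasurable]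
  -- compute the real integral
  have hint : ∫ ω, (K ω A).toReal ∂P = (P A).toReal := by
    rw [integral_congr_ae (hK.2 A hA).2, integral_condExp hℬ]
    rw [integral_indicator_const (1 : ℝ) hA, smul_eq_mul, mul_one, measureReal_def]
  have hmeas : Measurable fun ω => K ω A := by
    have h2 : (fun ω => K ω A) = fun ω => ENNReal.ofReal (K ω A).toReal := by
      funext ω
      haveI := hK.1 ω
      rw [ENNReal.ofReal_toReal (measure_ne_top _ _)]
    rw [h2]
    exact ENNReal.measurable_ofReal.comp (((hK.2 A hA).1).mono hℬ le_rfl)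
  have hlt : ∀ᵐ ω ∂P, K ω A < ⊤ := Filter.Eventually.of_forall fun ω => by
    haveI := hK.1 ω; exact measure_lt_top _ _
  have htr : ∫ ω, (K ω A).toReal ∂P = (∫⁻ ω, K ω A ∂P).toReal :=
    integral_toReal hmeas.aemeasurable hlt
  have hfin : ∫⁻ ω, K ω A ∂P ≠ ⊤ := by
    have hle : ∫⁻ ω, K ω A ∂P ≤ 1 := by
      calc ∫⁻ ω, K ω A ∂P ≤ ∫⁻ _, 1 ∂P :=
        lintegral_mono fun ω => by haveI := hK.1 ω; exact prob_le_one
      _ = 1 := by simp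
    exact (lt_of_le_of_lt hle one_lt_top).ne
  have := htr.symm.trans hint
  exact (ENNReal.toReal_eq_toReal_iff' hfin (measure_ne_top _ _)).mp this

lemma aux_lintegral_K (ℬ : MeasurableSpace Ω) [mΩ : MeasurableSpace Ω] (hℬ : ℬ ≤ mΩ)
    {P : Measure Ω} [IsProbabilityMeasure P] {K : Ω → Measure Ω}
    (hK : IsDisintegration P ℬ K) {f : Ω → ℝ≥0∞} (hf : Measurable f) :
    ∫⁻ ω, ∫⁻ x, f x ∂(K ω) ∂P = ∫⁻ x, f x ∂P := by
  conv_rhs => rw [← aux_bind_eq ℬ hℬ hK]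
  rw [Measure.lintegral_bind (aux_measurable_K ℬ hℬ hK).aemeasurable hf.aemeasurable]

lemma aux_null (ℬ : MeasurableSpace Ω) [mΩ : MeasurableSpace Ω] (hℬ : ℬ ≤ mΩ)
    {P : Measure Ω} [IsProbabilityMeasure P] {K : Ω → Measure Ω}
    (hK : IsDisintegration P ℬ K) {N : Set Ω} (hN : MeasurableSet N) (hN0 : P N = 0) :
    ∀ᵐ ω ∂P, K ω N = 0 := by
  have hmeas : Measurable fun ω => K ω N := by
    have h2 : (fun ω => K ω N) = fun ω => ENNReal.ofReal (K ω N).toReal := by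
      funext ω
      haveI := hK.1 ω
      rw [ENNReal.ofReal_toReal (measure_ne_top _ _)]
    rw [h2]
    exact ENNReal.measurable_ofReal.comp (((hK.2 N hN).1).mono hℬ le_rfl)
  have : ∫⁻ ω, K ω N ∂P = 0 := by
    have h := aux_lintegral_K ℬ hℬ hK (f := N.indicator 1) (measurable_one.indicator hN)
    simp only [lintegral_indicator_one hN, hN0] at h
    exact h
  exact (lintegral_eq_zero_iff hmeas).mp this

lemma aux_rpow_add_le {p : ℝ} (hp : 0 ≤ p) (b c : ℝ≥0∞) :
    (b + c) ^ p ≤ 2 ^ p * (b ^ p + c ^ p) := by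
  calc (b + c) ^ p ≤ (2 * max b c) ^ p := by
        apply ENNReal.rpow_le_rpow _ hp
        rw [two_mul]
        exact add_le_add (le_max_left _ _) (le_max_right _ _)
    _ = 2 ^ p * (max b c) ^ p := ENNReal.mul_rpow_of_nonneg _ _ hp
    _ ≤ 2 ^ p * (b ^ p + c ^ p) := by
        gcongr
        rcases le_total b c with h | h
        · rw [max_eq_right h]; exact le_add_self
        · rw [max_eq_left h]; exact le_add_right le_rfl

lemma aux_moment [MeasurableSpace M] [PseudoMetricSpace M] {p : ℝ} (hp : 0 ≤ p)
    (μ : Measure M) [IsProbabilityMeasure μ] (x0 : M)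
    (h : ∫⁻ y, edist x0 y ^ p ∂μ < ⊤) : HasFinitePMoment p μ := by
  intro x
  calc ∫⁻ y, edist x y ^ p ∂μ
      ≤ ∫⁻ y, 2 ^ p * (edist x x0 ^ p + edist x0 y ^ p) ∂μ := by
        apply lintegral_mono fun y => ?_
        calc edist x y ^ p ≤ (edist x x0 + edist x0 y) ^ p :=
              ENNReal.rpow_le_rpow (edist_triangle _ _ _) hp
          _ ≤ 2 ^ p * (edist x x0 ^ p + edist x0 y ^ p) := aux_rpow_add_le hp _ _
    _ = 2 ^ p * (edist x x0 ^ p * μ Set.univ + ∫⁻ y, edist x0 y ^ p ∂μ) := by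
        rw [lintegral_const_mul' _ _ (ENNReal.rpow_ne_top_of_nonneg hp ENNReal.ofNat_ne_top),
          lintegral_add_left measurable_const, lintegral_const]
    _ < ⊤ := by
        apply ENNReal.mul_lt_top (ENNReal.rpow_lt_top_of_nonneg hp ENNReal.ofNat_ne_top)
        exact ENNReal.add_lt_top.mpr ⟨ENNReal.mul_lt_top
          (ENNReal.rpow_lt_top_of_nonneg hp (edist_ne_top _ _)) (measure_lt_top _ _), h⟩

end Aux

lemma stmt8_aux (ℬ : MeasurableSpace Ω) [mΩ : MeasurableSpace Ω] (hℬ : ℬ ≤ mΩ)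
    [MetricSpace M] [MeasurableSpace M] [BorelSpace M]
    {P : MeasureTheory.Measure Ω} [MeasureTheory.IsProbabilityMeasure P]
    {K : Ω → MeasureTheory.Measure Ω} (hK : IsDisintegration P ℬ K)
    {p : ℝ} (hp : 1 ≤ p) {β : MeasureTheory.Measure M → M} (hβ : IsBarycentric p β)
    {φ ψ : Ω → M} (hφ : PIntegrable p P φ) (hψ : PIntegrable p P ψ) :
    (∫⁻ ω, edist (condBary β K φ ω) (condBary β K ψ ω) ^ p ∂P) ^ (1 / p)
      ≤ (∫⁻ ω, edist (φ ω) (ψ ω) ^ p ∂P) ^ (1 / p) := by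
  have hKm : Measurable K := aux_measurable_K ℬ hℬ hK
  have hKprob : ∀ ω, IsProbabilityMeasure (K ω) := hK.1
  have hlint : ∀ {f : Ω → ℝ≥0∞}, Measurable f →
      ∫⁻ ω, ∫⁻ x, f x ∂K ω ∂P = ∫⁻ x, f x ∂P :=
    fun hf => aux_lintegral_K ℬ hℬ hK hf
  have hnull : ∀ {N : Set Ω}, MeasurableSet N → P N = 0 → ∀ᵐ ω ∂P, K ω N = 0 :=
    fun hN hN0 => aux_null ℬ hℬ hK hN hN0
  obtain ⟨hφm, hφfin⟩ := hφ
  obtain ⟨hψm, hψfin⟩ := hψ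
  have hp0 : (0 : ℝ) ≤ p := le_trans zero_le_one hp
  have hpne : p ≠ 0 := by positivity
  -- measurable representatives
  set g := hφm.mk φ with hgdef
  have hgm : Measurable g := hφm.stronglyMeasurable_mk.measurable
  have hφg : φ =ᵐ[P] g := hφm.ae_eq_mk
  set h := hψm.mk ψ with hhdef
  have hhm : Measurable h := hψm.stronglyMeasurable_mk.measurable
  have hψh : ψ =ᵐ[P] h := hψm.ae_eq_mk
  -- Ω is nonempty
  haveI hΩne : Nonempty Ω := by
    by_contra hc
    rw [not_nonempty_iff] at hc
    have h1 : P Set.univ = 1 := measure_univ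
    rw [Set.univ_eq_empty_iff.mpr hc, measure_empty] at h1
    exact zero_ne_one h1
  set x0 : M := φ (Classical.arbitrary Ω) with hx0
  -- measurable edist functions
  have hFg : Measurable fun x => edist x0 (g x) ^ p :=
    (((continuous_const.edist continuous_id).measurable).comp hgm).pow_const p
  have hFh : Measurable fun x => edist x0 (h x) ^ p :=
    (((continuous_const.edist continuous_id).measurable).comp hhm).pow_const p
  have hF : Measurable fun x => edist (g x) (h x) ^ p := by
    have : StronglyMeasurable fun x => edist (g x) (h x) :=
      continuous_edist.comp_stronglyMeasurable
        (hφm.stronglyMeasurable_mk.prodMk hψm.stronglyMeasurable_mk)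
    exact this.measurable.pow_const p
  -- the exceptional null set
  set N : Set Ω := toMeasurable P ({x | φ x ≠ g x} ∪ {x | ψ x ≠ h x}) with hNdef
  have hNm : MeasurableSet N := measurableSet_toMeasurable _ _
  have hN0 : P N = 0 := by
    rw [measure_toMeasurable]
    exact measure_union_null hφg hψh
  have hae1 : ∀ᵐ ω ∂P, K ω N = 0 := hnull hNm hN0
  -- a.e. finiteness of the moments of the disintegration
  have hedm : Measurable fun y : M => edist x0 y ^ p :=
    ((continuous_const.edist continuous_id).measurable).pow_const p
  have hfin_g : ∫⁻ ω, edist x0 (g ω) ^ p ∂P < ⊤ := by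
    have e : ∫⁻ ω, edist x0 (g ω) ^ p ∂P = ∫⁻ ω, edist x0 (φ ω) ^ p ∂P := by
      apply lintegral_congr_ae
      filter_upwards [hφg] with ω hω
      rw [hω]
    rw [e]; exact hφfin x0
  have hfin_h : ∫⁻ ω, edist x0 (h ω) ^ p ∂P < ⊤ := by
    have e : ∫⁻ ω, edist x0 (h ω) ^ p ∂P = ∫⁻ ω, edist x0 (ψ ω) ^ p ∂P := by
      apply lintegral_congr_ae
      filter_upwards [hψh] with ω hω
      rw [hω]
    rw [e]; exact hψfin x0
  have hae2 : ∀ᵐ ω ∂P, ∫⁻ x, edist x0 (g x) ^ p ∂K ω < ⊤ := by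
    have hm2 : Measurable fun ω => ∫⁻ x, edist x0 (g x) ^ p ∂K ω :=
      (Measure.measurable_lintegral hFg).comp hKm
    apply ae_lt_top hm2
    rw [hlint hFg]
    exact hfin_g.ne
  have hae3 : ∀ᵐ ω ∂P, ∫⁻ x, edist x0 (h x) ^ p ∂K ω < ⊤ := by
    have hm2 : Measurable fun ω => ∫⁻ x, edist x0 (h x) ^ p ∂K ω :=
      (Measure.measurable_lintegral hFh).comp hKm
    apply ae_lt_top hm2
    rw [hlint hFh]
    exact hfin_h.ne
  -- pointwise bound
  have hpoint : ∀ᵐ ω ∂P, edist (condBary β K φ ω) (condBary β K ψ ω) ^ p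
      ≤ ∫⁻ x, edist (g x) (h x) ^ p ∂K ω := by
    filter_upwards [hae1, hae2, hae3] with ω h1 h2 h3
    haveI := hKprob ω
    -- replace φ, ψ by measurable representatives
    have hφg' : φ =ᵐ[K ω] g :=
      measure_mono_null (fun x hx => subset_toMeasurable _ _ (Or.inl hx)) h1
    have hψh' : ψ =ᵐ[K ω] h :=
      measure_mono_null (fun x hx => subset_toMeasurable _ _ (Or.inr hx)) h1
    have e1 : condBary β K φ ω = β ((K ω).map g) := by
      unfold condBary; rw [Measure.map_congr hφg']
    have e2 : condBary β K ψ ω = β ((K ω).map h) := by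
      unfold condBary; rw [Measure.map_congr hψh']
    rw [e1, e2]
    haveI : IsProbabilityMeasure ((K ω).map g) := Measure.isProbabilityMeasure_map hgm.aemeasurable
    haveI : IsProbabilityMeasure ((K ω).map h) := Measure.isProbabilityMeasure_map hhm.aemeasurable
    have hmomg : HasFinitePMoment p ((K ω).map g) := by
      apply aux_moment hp0 _ x0
      rw [lintegral_map hedm hgm]
      exact h2
    have hmomh : HasFinitePMoment p ((K ω).map h) := by
      apply aux_moment hp0 _ x0
      rw [lintegral_map hedm hhm]
      exact h3
    have hcontract := hβ.contract _ _ ‹_› ‹_› hmomg hmomh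
    -- bound the Wasserstein distance by the natural coupling
    set π : Measure (M × M) := (K ω).map fun x => (g x, h x) with hπ
    have hpair : Measurable fun x => (g x, h x) := hgm.prodMk hhm
    have hcoup : IsCoupling π ((K ω).map g) ((K ω).map h) := by
      constructor
      · rw [hπ, Measure.map_map measurable_fst hpair]; rfl
      · rw [hπ, Measure.map_map measurable_snd hpair]; rfl
    have hwass : wassDist p ((K ω).map g) ((K ω).map h)
        ≤ (∫⁻ x, edist (g x) (h x) ^ p ∂K ω) ^ (1 / p) := by
      refine le_trans (iInf_le_of_le π (iInf_le _ hcoup)) ?_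
      apply ENNReal.rpow_le_rpow _ (by positivity)
      exact lintegral_map_le _ _
    have : edist (β ((K ω).map g)) (β ((K ω).map h))
        ≤ (∫⁻ x, edist (g x) (h x) ^ p ∂K ω) ^ (1 / p) := le_trans hcontract hwass
    calc edist (β ((K ω).map g)) (β ((K ω).map h)) ^ p
        ≤ ((∫⁻ x, edist (g x) (h x) ^ p ∂K ω) ^ (1 / p)) ^ p :=
          ENNReal.rpow_le_rpow this hp0
      _ = ∫⁻ x, edist (g x) (h x) ^ p ∂K ω := by
          rw [← ENNReal.rpow_mul, one_div_mul_cancel hpne, ENNReal.rpow_one]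
  -- integrate
  apply ENNReal.rpow_le_rpow _ (by positivity)
  calc ∫⁻ ω, edist (condBary β K φ ω) (condBary β K ψ ω) ^ p ∂P
      ≤ ∫⁻ ω, ∫⁻ x, edist (g x) (h x) ^ p ∂K ω ∂P := lintegral_mono_ae hpoint
    _ = ∫⁻ x, edist (g x) (h x) ^ p ∂P := hlint hF
    _ = ∫⁻ ω, edist (φ ω) (ψ ω) ^ p ∂P := by
        apply lintegral_congr_ae
        filter_upwards [hφg, hψh] with ω e1 e2
        rw [e1, e2]

theorem stmt8 [mΩ : MeasurableSpace Ω] [StandardBorelSpace Ω]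
    [MetricSpace M] [CompleteSpace M] [MeasurableSpace M] [BorelSpace M]
    (P : MeasureTheory.Measure Ω) [MeasureTheory.IsProbabilityMeasure P]
    (ℬ : MeasurableSpace Ω) (hℬ : ℬ ≤ mΩ)
    (K : Ω → @MeasureTheory.Measure Ω mΩ) (hK : IsDisintegration P ℬ K)
    (p : ℝ) (hp : 1 ≤ p) (β : MeasureTheory.Measure M → M) (hβ : IsBarycentric p β)
    (φ ψ : Ω → M) (hφ : PIntegrable p P φ) (hψ : PIntegrable p P ψ) :
    (∫⁻ ω, edist (condBary β K φ ω) (condBary β K ψ ω) ^ p ∂P) ^ (1 / p)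
      ≤ (∫⁻ ω, edist (φ ω) (ψ ω) ^ p ∂P) ^ (1 / p) :=
  stmt8_aux ℬ (mΩ := mΩ) hℬ hK hp hβ hφ hψ
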